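/- Let R be a ring, M a finitely generated semisimple left R-module, and φ : M → M a nilpotent R-endomorphism. Then there exist elements x_i^{(t)} ∈ M for 1 ≤ t ≤ r, 1 ≤ i ≤ k_t such that each cyclic submodule R·x_i^{(t)} is simple, M is the internal direct sum ⊕_{t,i} R·x_i^{(t)}, and φ(x_i^{(t)}) = x_{i-1}^{(t)} for 2 ≤ i ≤ k_t while φ(x_1^{(t)}) = 0 for every t. -/

import Mathlib

namespace Stmt13Aux

open Submodule

variable {R M : Type*} [Ring R] [AddCommGroup M] [Module R M]

lemma mem_iSup_iff_exists_finset_sum {ι : Type*} (p : ι → Submodule R M) (v : M) :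
    v ∈ iSup p ↔ ∃ (s : Finset ι) (g : ι → M), (∀ j, g j ∈ p j) ∧ ∑ j ∈ s, g j = v := by
  rw [Submodule.mem_iSup_iff_exists_finsupp]
  constructor
  · rintro ⟨f, hf, rfl⟩
    exact ⟨f.support, f, hf, rfl⟩
  · rintro ⟨s, g, hg, rfl⟩
    rw [← Submodule.mem_iSup_iff_exists_finsupp]
    exact sum_mem fun j _ => le_iSup p j (hg j)

lemma iSupIndep_iff_finset_sum {ι : Type*} (p : ι → Submodule R M) :
    iSupIndep p ↔ ∀ (s : Finset ι) (g : ι → M), (∀ j, g j ∈ p j) →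
      ∑ j ∈ s, g j = 0 → ∀ j ∈ s, g j = 0 := by
  constructor
  · intro h s g hg hsum j hj
    classical
    have hdisj := h j
    rw [disjoint_def] at hdisj
    refine hdisj _ (hg j) ?_
    have hrepr : g j = -∑ i ∈ s.erase j, g i := by
      have h2 := Finset.add_sum_erase s g hj
      rw [hsum] at h2
      exact eq_neg_of_add_eq_zero_left h2
    rw [hrepr]
    refine neg_mem (sum_mem fun i hi => ?_)
    have hne : i ≠ j := (Finset.mem_erase.mp hi).1
    exact le_biSup p hne (hg i)
  · intro h i
    rw [disjoint_def]
    intro v hv hv'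
    rw [iSup_subtype'] at hv'
    rw [mem_iSup_iff_exists_finset_sum] at hv'
    obtain ⟨s, g, hg, hsum⟩ := hv'
    classical
    set s' : Finset ι := insert i (s.map ⟨Subtype.val, Subtype.val_injective⟩) with hs'
    set g' : ι → M := fun j => if hj : j = i then -v else g ⟨j, hj⟩ with hg'
    have hmem : ∀ j, g' j ∈ (fun j => p j) j := by
      intro j
      by_cases hj : j = i
      · subst hj; simp [g', neg_mem hv]
      · simpa [g', hj] using hg ⟨j, hj⟩
    have hnotin : i ∉ s.map ⟨Subtype.val, Subtype.val_injective⟩ := by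
      simp only [Finset.mem_map, Function.Embedding.coeFn_mk]
      rintro ⟨⟨a, ha⟩, _, h⟩
      exact ha h
    have hsum' : ∑ j ∈ s', g' j = 0 := by
      rw [hs', Finset.sum_insert hnotin, Finset.sum_map]
      have : ∀ a ∈ s, g' ((⟨Subtype.val, Subtype.val_injective⟩ : _ ↪ ι) a) = g a := by
        rintro ⟨a, ha⟩ _
        simp [g', ha]
      rw [Finset.sum_congr rfl this, hsum]
      simp [g']
    have := h s' g' hmem hsum' i (Finset.mem_insert_self _ _)
    simpa [g'] using this


lemma span_singleton_eq_of_atom {S : Submodule R M} (hS : IsAtom S) {x : M}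
    (hx : x ∈ S) (hx0 : x ≠ 0) : span R {x} = S := by
  have hle : span R {x} ≤ S := by rwa [span_singleton_le_iff_mem]
  rcases hle.lt_or_eq with h | h
  · exfalso
    have hbot := hS.2 _ h
    rw [Submodule.eq_bot_iff] at hbot
    exact hx0 (hbot x (mem_span_singleton_self x))
  · exact h

lemma le_of_le_atom {S b : Submodule R M} (hS : IsAtom S) (hb : b ≤ S) : b = ⊥ ∨ b = S :=
  (hb.lt_or_eq).imp (hS.2 _) id

/-- relative complement in a semisimple module -/
lemma exists_relative_compl [IsSemisimpleModule R M] {Y K : Submodule R M} (hYK : Y ≤ K) :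
    ∃ Z ≤ K, Y ⊓ Z = ⊥ ∧ Y ⊔ Z = K := by
  obtain ⟨C, hC⟩ := exists_isCompl Y
  refine ⟨C ⊓ K, inf_le_right, ?_, ?_⟩
  · rw [← inf_assoc]
    simp [hC.inf_eq_bot]
  · rw [← sup_inf_assoc_of_le _ hYK, hC.sup_eq_top, top_inf_eq]

/-- decomposition of a submodule into finitely many independent cyclic atoms, padded indexing -/
lemma exists_atomic_decomp [IsSemisimpleModule R M] [Module.Finite R M] (Z : Submodule R M) :
    ∃ (s : ℕ) (z : ℕ → M),
      (∀ j, 1 ≤ j → j ≤ s → z j ∈ Z ∧ IsAtom (span R {z j})) ∧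
      (∀ j, ¬(1 ≤ j ∧ j ≤ s) → z j = 0) ∧
      iSupIndep (fun j : ℕ => span R {z j}) ∧
      (⨆ j : ℕ, span R {z j}) = Z := by
  classical
  have hatomic : IsAtomic (Submodule R M) :=
    isAtomic_of_orderBot_wellFounded_lt (wellFounded_lt)
  induction Z using IsWellFounded.induction (r := (· < · : Submodule R M → Submodule R M → Prop))
    with
  | _ Z IH =>
  by_cases hZ : Z = ⊥
  · refine ⟨0, fun _ => 0, by omega, fun _ _ => rfl, ?_, ?_⟩
    · intro j
      simp [span_zero_singleton]
    · simp [span_zero_singleton, hZ]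
  · obtain ⟨a, ha, haZ⟩ := (hatomic.eq_bot_or_exists_atom_le Z).resolve_left hZ
    obtain ⟨x, hxa, hx0⟩ := Submodule.exists_mem_ne_zero_of_ne_bot ha.1
    have hspanx : span R {x} = a := span_singleton_eq_of_atom ha hxa hx0
    obtain ⟨Z', hZ'le, hinf, hsup⟩ := exists_relative_compl haZ
    have hZ'lt : Z' < Z := by
      rcases hZ'le.lt_or_eq with h | h
      · exact h
      · exfalso
        apply ha.1
        rw [← hinf, h]
        exact (inf_eq_left.mpr haZ).symm
    obtain ⟨s, z, hz1, hz2, hz3, hz4⟩ := IH Z' hZ'lt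
    have hzs1 : z (s + 1) = 0 := hz2 _ (by omega)
    refine ⟨s + 1, fun j => if j = s + 1 then x else z j, ?_, ?_, ?_, ?_⟩
    · intro j h1 h2
      by_cases hj : j = s + 1
      · subst hj
        simp only [if_pos rfl]
        exact ⟨haZ hxa, hspanx ▸ ha⟩
      · have := hz1 j h1 (by omega)
        simp only [if_neg hj]
        exact ⟨hZ'le this.1, this.2⟩
    · intro j hj
      have hj' : j ≠ s + 1 := by omega
      simp only [if_neg hj']
      exact hz2 j (by omega)
    · rw [iSupIndep_iff_finset_sum]
      intro s0 g hg hsum j hj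
      have hgZ' : ∀ i, i ≠ s + 1 → g i ∈ Z' := by
        intro i hi'
        have h1 : g i ∈ span R {z i} := by simpa [if_neg hi'] using hg i
        exact hz4 ▸ le_iSup (fun i => span R {z i}) i h1
      have htop : s + 1 ∈ s0 → g (s + 1) = 0 := by
        intro hmem
        have h1 : g (s + 1) ∈ a := by
          simpa [hspanx] using hg (s + 1)
        have h2 : g (s + 1) = -∑ i ∈ s0.erase (s + 1), g i := by
          have h3 := Finset.add_sum_erase s0 g hmem
          rw [hsum] at h3
          exact eq_neg_of_add_eq_zero_left h3
        have h4 : g (s + 1) ∈ Z' := by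
          rw [h2]
          exact neg_mem (sum_mem fun i hi => hgZ' i (Finset.mem_erase.mp hi).1)
        have h5 : g (s + 1) ∈ a ⊓ Z' := ⟨h1, h4⟩
        rw [hinf] at h5
        simpa using h5
      have hsum' : ∑ i ∈ s0.erase (s + 1), g i = 0 := by
        by_cases hmem : s + 1 ∈ s0
        · have h3 := Finset.add_sum_erase s0 g hmem
          rw [hsum, htop hmem] at h3
          simpa using h3
        · rw [Finset.erase_eq_of_notMem hmem]
          exact hsum
      set g'' : ℕ → M := fun i => if i = s + 1 then 0 else g i with hg''def
      have hg'' : ∀ i, g'' i ∈ span R {z i} := by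
        intro i
        by_cases hi : i = s + 1
        · simp [g'', hi]
        · have h1 : g i ∈ span R {z i} := by simpa [if_neg hi] using hg i
          simpa [g'', hi] using h1
      have hsum'' : ∑ i ∈ s0.erase (s + 1), g'' i = 0 := by
        rw [Finset.sum_congr rfl (fun i hi => ?_), hsum']
        simp [g'', (Finset.mem_erase.mp hi).1]
      have hind := (iSupIndep_iff_finset_sum (fun i => span R {z i})).mp hz3
        (s0.erase (s + 1)) g'' hg'' hsum''
      by_cases hj' : j = s + 1
      · exact hj' ▸ htop (hj' ▸ hj)
      · have := hind j (Finset.mem_erase.mpr ⟨hj', hj⟩)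
        simpa [g'', hj'] using this
    · apply le_antisymm
      · apply iSup_le
        intro j
        by_cases hj : j = s + 1
        · subst hj
          simpa [hspanx] using haZ
        · have h6 := le_trans (hz4 ▸ le_iSup (fun i => span R {z i}) j) hZ'le
          simpa [hj] using h6
      · rw [← hsup]
        apply sup_le
        · have h6 : span R {(fun j => if j = s + 1 then x else z j) (s + 1)} ≤
              ⨆ j, span R {(fun j => if j = s + 1 then x else z j) j} :=
            le_iSup (fun j => span R {(fun i => if i = s + 1 then x else z i) j}) (s + 1)
          simpa [hspanx] using h6
        · rw [← hz4]
          apply iSup_le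
          intro j
          by_cases hj : j = s + 1
          · rw [hj, hzs1, span_zero_singleton]
            exact bot_le
          · have h6 : span R {(fun i => if i = s + 1 then x else z i) j} ≤
                ⨆ i, span R {(fun i => if i = s + 1 then x else z i) i} :=
              le_iSup (fun i => span R {(fun i' => if i' = s + 1 then x else z i') i}) j
            simpa [hj] using h6

lemma exists_atom_lift [IsSemisimpleModule R M] (φ : M →ₗ[R] M) (N : Submodule R M) {y : M}
    (hy : IsAtom (span R {y})) (hmem : y ∈ Submodule.map φ N) :
    ∃ x, x ∈ N ∧ φ x = y ∧ IsAtom (span R {x}) := by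
  have hy0 : y ≠ 0 := fun h => hy.1 (by rw [h, span_zero_singleton])
  obtain ⟨n, hnN, hn⟩ := hmem
  set P := N ⊓ Submodule.comap φ (span R {y}) with hP
  have hnP : n ∈ P := ⟨hnN, by simp [hn, mem_span_singleton_self]⟩
  set K0 := LinearMap.ker φ ⊓ P with hK0
  obtain ⟨C, hCP, hinf, hsup⟩ := exists_relative_compl (inf_le_right : K0 ≤ P)
  have hnsup : n ∈ K0 ⊔ C := hsup ▸ hnP
  obtain ⟨u, hu, c, hc, huc⟩ := Submodule.mem_sup.mp hnsup
  have hφu : φ u = 0 := LinearMap.mem_ker.mp hu.1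
  have hφc : φ c = y := by
    have : φ n = φ u + φ c := by rw [← map_add, huc]
    rw [hn, hφu, zero_add] at this
    exact this.symm
  have hcN : c ∈ N := (hCP hc).1
  have hc0 : c ≠ 0 := fun h => hy0 (by rw [← hφc, h, map_zero])
  have hkerC : LinearMap.ker φ ⊓ C = ⊥ := by
    have h1 : LinearMap.ker φ ⊓ C ≤ K0 ⊓ C :=
      le_inf (le_inf inf_le_left (le_trans inf_le_right hCP)) inf_le_right
    exact le_bot_iff.mp (hinf ▸ h1)
  have hCcomap : C ≤ Submodule.comap φ (span R {y}) := le_trans hCP inf_le_right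
  have hatomC : ∀ b ≤ C, b ≠ ⊥ → b = C := by
    intro b hbC hb0
    have h1 : Submodule.map φ b ≤ span R {y} :=
      le_trans (Submodule.map_mono (le_trans hbC hCcomap)) (Submodule.map_comap_le _ _)
    have h2 : Submodule.map φ b ≠ ⊥ := by
      obtain ⟨w, hwb, hw0⟩ := Submodule.exists_mem_ne_zero_of_ne_bot hb0
      intro h3
      have hφw : φ w ∈ Submodule.map φ b := Submodule.mem_map_of_mem hwb
      rw [h3, Submodule.mem_bot] at hφw
      have : w ∈ LinearMap.ker φ ⊓ C := ⟨LinearMap.mem_ker.mpr hφw, hbC hwb⟩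
      rw [hkerC, Submodule.mem_bot] at this
      exact hw0 this
    have h3 : Submodule.map φ b = span R {y} := (le_of_le_atom hy h1).resolve_left h2
    refine le_antisymm hbC ?_
    intro w hwC
    have h4 : φ w ∈ Submodule.map φ b := by
      rw [h3]
      exact hCcomap hwC
    obtain ⟨w', hw'b, hw'⟩ := h4
    have h5 : w - w' ∈ LinearMap.ker φ ⊓ C :=
      ⟨LinearMap.mem_ker.mpr (by rw [map_sub, hw', sub_self]), sub_mem hwC (hbC hw'b)⟩
    rw [hkerC, Submodule.mem_bot, sub_eq_zero] at h5
    exact h5 ▸ hw'b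
  have hCne : C ≠ ⊥ := fun h => hc0 (by rw [← Submodule.mem_bot (R := R), ← h]; exact hc)
  have hCatom : IsAtom C := by
    refine ⟨hCne, fun b hb => ?_⟩
    by_contra hb0
    exact hb.ne (hatomC b hb.le hb0)
  have hspan : span R {c} = C := span_singleton_eq_of_atom hCatom hc hc0
  exact ⟨c, hcN, hφc, hspan ▸ hCatom⟩

lemma jordan_on [IsSemisimpleModule R M] [Module.Finite R M] (φ : M →ₗ[R] M) (k : ℕ) :
    ∀ (N : Submodule R M), Submodule.map φ N ≤ N → (∀ m ∈ N, (φ ^ k) m = 0) →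
    ∃ (r : ℕ) (kf : ℕ → ℕ) (x : ℕ → ℕ → M),
      (∀ t, 1 ≤ t → t ≤ r → 1 ≤ kf t) ∧
      (∀ t i, 1 ≤ t → t ≤ r → 1 ≤ i → i ≤ kf t → x t i ∈ N ∧ IsAtom (span R {x t i})) ∧
      (∀ t i, ¬(1 ≤ t ∧ t ≤ r ∧ 1 ≤ i ∧ i ≤ kf t) → x t i = 0) ∧
      iSupIndep (fun q : ℕ × ℕ => span R {x q.1 q.2}) ∧
      (⨆ q : ℕ × ℕ, span R {x q.1 q.2}) = N ∧
      (∀ t i, 1 ≤ t → t ≤ r → 2 ≤ i → i ≤ kf t → φ (x t i) = x t (i - 1)) ∧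
      (∀ t, 1 ≤ t → t ≤ r → φ (x t 1) = 0) := by
  induction k with
  | zero =>
    intro N _ hk
    have hN : N = ⊥ := by
      rw [eq_bot_iff]
      intro m hm
      have := hk m hm
      simpa using this
    refine ⟨0, fun _ => 0, fun _ _ => 0, by omega, by omega, fun _ _ _ => rfl, ?_, ?_, by omega,
      by omega⟩
    · intro q
      simp [span_zero_singleton]
    · simp [span_zero_singleton, hN]
  | succ k IH =>
    intro N hmapN hk
    classical
    obtain ⟨r, kf, y, hpos, hmem, hpad, hindep, hsupW, hchain, hker1⟩ :=
      IH (Submodule.map φ N) (Submodule.map_mono hmapN)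
        (by
          rintro m ⟨n, hn, rfl⟩
          have h1 := hk n hn
          rw [pow_succ] at h1
          exact h1)
    set W := Submodule.map φ N with hW
    have hWN : W ≤ N := hmapN
    -- lifts of chain tops
    have hlift : ∀ t, ∃ x, 1 ≤ t → t ≤ r →
        x ∈ N ∧ φ x = y t (kf t) ∧ IsAtom (span R {x}) := by
      intro t
      by_cases h : 1 ≤ t ∧ t ≤ r
      · obtain ⟨x, hx⟩ := exists_atom_lift φ N
          (hmem t (kf t) h.1 h.2 (hpos t h.1 h.2) le_rfl).2
          (hmem t (kf t) h.1 h.2 (hpos t h.1 h.2) le_rfl).1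
        exact ⟨x, fun _ _ => hx⟩
      · exact ⟨0, fun h1 h2 => absurd ⟨h1, h2⟩ h⟩
    choose c hc using hlift
    -- kernel complement
    set K := LinearMap.ker φ ⊓ N with hKdef
    set Y1 := ⨆ t : ℕ, span R {y t 1} with hY1def
    have hY1K : Y1 ≤ K := by
      apply iSup_le
      intro t
      by_cases h : 1 ≤ t ∧ t ≤ r
      · rw [span_le, Set.singleton_subset_iff]
        exact ⟨LinearMap.mem_ker.mpr (hker1 t h.1 h.2),
          hWN (hmem t 1 h.1 h.2 le_rfl (hpos t h.1 h.2)).1⟩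
      · have hy0 : y t 1 = 0 := hpad t 1 (fun hcon => h ⟨hcon.1, hcon.2.1⟩)
        rw [hy0, span_zero_singleton]
        exact bot_le
    obtain ⟨Z, hZK, hYZinf, hYZsup⟩ := exists_relative_compl hY1K
    obtain ⟨s, z, hz1, hz2, hz3, hz4⟩ := exists_atomic_decomp (R := R) Z
    -- the new family
    set x' : ℕ → ℕ → M := fun t i =>
      if 1 ≤ t ∧ t ≤ r ∧ 1 ≤ i ∧ i ≤ kf t + 1 then (if i ≤ kf t then y t i else c t)
      else if r + 1 ≤ t ∧ t ≤ r + s ∧ i = 1 then z (t - r) else 0 with hx'def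
    have hx'A : ∀ t i, 1 ≤ t → t ≤ r → 1 ≤ i → i ≤ kf t → x' t i = y t i := by
      intro t i h1 h2 h3 h4
      simp only [hx'def]
      rw [if_pos ⟨h1, h2, h3, by omega⟩, if_pos h4]
    have hx'B : ∀ t, 1 ≤ t → t ≤ r → x' t (kf t + 1) = c t := by
      intro t h1 h2
      simp only [hx'def]
      rw [if_pos ⟨h1, h2, by omega, le_rfl⟩, if_neg (by omega)]
    have hx'C : ∀ t, r + 1 ≤ t → t ≤ r + s → x' t 1 = z (t - r) := by
      intro t h1 h2
      simp only [hx'def]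
      rw [if_neg (by rintro ⟨-, hb, -, -⟩; omega), if_pos ⟨h1, h2, by trivial⟩]
    have hx'D : ∀ t i, ¬(1 ≤ t ∧ t ≤ r ∧ 1 ≤ i ∧ i ≤ kf t + 1) →
        ¬(r + 1 ≤ t ∧ t ≤ r + s ∧ i = 1) → x' t i = 0 := by
      intro t i h1 h2
      simp only [hx'def]
      rw [if_neg h1, if_neg h2]
    set kf' : ℕ → ℕ := fun t => if t ≤ r then kf t + 1 else 1 with hkf'def
    have hy0ne : ∀ t i, 1 ≤ t → t ≤ r → 1 ≤ i → i ≤ kf t → y t i ≠ 0 := by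
      intro t i h1 h2 h3 h4 h0
      exact (hmem t i h1 h2 h3 h4).2.1 (by rw [h0, span_zero_singleton])
    have hφz : ∀ j, φ (z j) = 0 := by
      intro j
      by_cases h : 1 ≤ j ∧ j ≤ s
      · exact LinearMap.mem_ker.mp (hZK (hz1 j h.1 h.2).1).1
      · rw [hz2 j h, map_zero]
    have hkey : ∀ t j, φ (x' t (j + 1)) = y t j := by
      intro t j
      by_cases hA : 1 ≤ t ∧ t ≤ r ∧ 1 ≤ j + 1 ∧ j + 1 ≤ kf t + 1
      · obtain ⟨h1, h2, -, h4⟩ := hA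
        by_cases hj : j + 1 ≤ kf t
        · rw [hx'A t (j + 1) h1 h2 (by omega) hj]
          by_cases hj1 : 1 ≤ j
          · have hch := hchain t (j + 1) h1 h2 (by omega) hj
            simpa using hch
          · have hj0 : j = 0 := by omega
            subst hj0
            rw [hker1 t h1 h2]
            exact (hpad t 0 (by rintro ⟨-, -, hh, -⟩; omega)).symm
        · have hj' : j = kf t := by omega
          subst hj'
          rw [hx'B t h1 h2, (hc t h1 h2).2.1]
      · have hyz : y t j = 0 :=
          hpad t j (by rintro ⟨a, b, cc, d⟩; exact hA ⟨a, b, by omega, by omega⟩)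
        rw [hyz]
        by_cases hB : r + 1 ≤ t ∧ t ≤ r + s ∧ j + 1 = 1
        · have hj0 : j = 0 := by omega
          subst hj0
          rw [hx'C t hB.1 hB.2.1, hφz (t - r)]
        · rw [hx'D t (j + 1) hA hB, map_zero]
    have hx'N : ∀ t i, x' t i ∈ N := by
      intro t i
      simp only [hx'def]
      split_ifs with hA hi hB
      · exact hWN (hmem t i hA.1 hA.2.1 hA.2.2.1 hi).1
      · exact (hc t hA.1 hA.2.1).1
      · have : z (t - r) ∈ Z := (hz1 (t - r) (by omega) (by omega)).1
        exact ((hZK this).2 : z (t - r) ∈ N)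
      · exact zero_mem N
    have hpos' : ∀ t, 1 ≤ t → t ≤ r + s → 1 ≤ kf' t := by
      intro t h1 h2
      simp only [hkf'def]
      split_ifs <;> omega
    have hmem' : ∀ t i, 1 ≤ t → t ≤ r + s → 1 ≤ i → i ≤ kf' t →
        x' t i ∈ N ∧ IsAtom (span R {x' t i}) := by
      intro t i h1 h2 h3 h4
      refine ⟨hx'N t i, ?_⟩
      by_cases ht : t ≤ r
      · rw [hkf'def] at h4
        simp only [if_pos ht] at h4
        by_cases hi : i ≤ kf t
        · rw [hx'A t i h1 ht h3 hi]
          exact (hmem t i h1 ht h3 hi).2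
        · have hieq : i = kf t + 1 := by omega
          subst hieq
          rw [hx'B t h1 ht]
          exact (hc t h1 ht).2.2
      · rw [hkf'def] at h4
        simp only [if_neg ht] at h4
        have hieq : i = 1 := by omega
        subst hieq
        rw [hx'C t (by omega) h2]
        exact (hz1 (t - r) (by omega) (by omega)).2
    have hpad' : ∀ t i, ¬(1 ≤ t ∧ t ≤ r + s ∧ 1 ≤ i ∧ i ≤ kf' t) → x' t i = 0 := by
      intro t i hcon
      apply hx'D
      · rintro ⟨a, b, cc, d⟩
        refine hcon ⟨a, by omega, cc, ?_⟩
        simp only [hkf'def, if_pos b]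
        exact d
      · rintro ⟨a, b, cc⟩
        refine hcon ⟨by omega, b, by omega, ?_⟩
        simp only [hkf'def, if_neg (by omega : ¬ t ≤ r)]
        omega
    have hchain' : ∀ t i, 1 ≤ t → t ≤ r + s → 2 ≤ i → i ≤ kf' t →
        φ (x' t i) = x' t (i - 1) := by
      intro t i h1 h2 h3 h4
      have ht : t ≤ r := by
        by_contra hcon
        simp only [hkf'def, if_neg hcon] at h4
        omega
      simp only [hkf'def, if_pos ht] at h4
      have hk2 := hkey t (i - 1)
      rw [show i - 1 + 1 = i from by omega] at hk2
      rw [hk2, hx'A t (i - 1) h1 ht (by omega) (by omega)]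
    have hker' : ∀ t, 1 ≤ t → t ≤ r + s → φ (x' t 1) = 0 := by
      intro t h1 h2
      have hk2 := hkey t 0
      norm_num at hk2
      rw [hk2]
      exact hpad t 0 (by rintro ⟨-, -, hh, -⟩; omega)
    have hspanmap : ∀ u v : M, v ∈ span R {u} → φ v ∈ span R {φ u} := by
      intro u v hv
      obtain ⟨a, rfl⟩ := mem_span_singleton.mp hv
      rw [map_smul]
      exact smul_mem _ a (mem_span_singleton_self _)
    have hY1X : Y1 ≤ ⨆ q : ℕ × ℕ, span R {x' q.1 q.2} := by
      apply iSup_le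
      intro t
      by_cases h : 1 ≤ t ∧ t ≤ r
      · have he : y t 1 = x' t 1 := (hx'A t 1 h.1 h.2 le_rfl (hpos t h.1 h.2)).symm
        rw [he]
        exact le_iSup (fun q : ℕ × ℕ => span R {x' q.1 q.2}) (t, 1)
      · rw [hpad t 1 (fun hcon => h ⟨hcon.1, hcon.2.1⟩), span_zero_singleton]
        exact bot_le
    have hZX : Z ≤ ⨆ q : ℕ × ℕ, span R {x' q.1 q.2} := by
      rw [← hz4]
      apply iSup_le
      intro j
      by_cases h : 1 ≤ j ∧ j ≤ s
      · have he : z j = x' (r + j) 1 := by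
          rw [hx'C (r + j) (by omega) (by omega)]
          congr 1
          omega
        rw [he]
        exact le_iSup (fun q : ℕ × ℕ => span R {x' q.1 q.2}) (r + j, 1)
      · rw [hz2 j h, span_zero_singleton]
        exact bot_le
    have hsup' : (⨆ q : ℕ × ℕ, span R {x' q.1 q.2}) = N := by
      apply le_antisymm
      · apply iSup_le
        intro q
        rw [span_le, Set.singleton_subset_iff]
        exact hx'N q.1 q.2
      · intro n hn
        have hφn : φ n ∈ W := ⟨n, hn, rfl⟩
        rw [← hsupW, mem_iSup_iff_exists_finset_sum] at hφn
        obtain ⟨s0, g, hg, hgsum⟩ := hφn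
        have hw : ∀ q : ℕ × ℕ, ∃ w, w ∈ span R {x' q.1 (q.2 + 1)} ∧ φ w = g q := by
          intro q
          have h1 : g q ∈ span R {φ (x' q.1 (q.2 + 1))} := by
            rw [hkey q.1 q.2]
            exact hg q
          obtain ⟨a, ha⟩ := mem_span_singleton.mp h1
          exact ⟨a • x' q.1 (q.2 + 1), smul_mem _ a (mem_span_singleton_self _),
            by rw [map_smul, ha]⟩
        choose w hw1 hw2 using hw
        have hwX : ∑ q ∈ s0, w q ∈ ⨆ q : ℕ × ℕ, span R {x' q.1 q.2} :=
          sum_mem fun q _ =>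
            le_iSup (fun q : ℕ × ℕ => span R {x' q.1 q.2}) (q.1, q.2 + 1) (hw1 q)
        have hker2 : n - ∑ q ∈ s0, w q ∈ K := by
          refine Submodule.mem_inf.mpr ⟨?_, ?_⟩
          · rw [LinearMap.mem_ker, map_sub, map_sum,
              Finset.sum_congr rfl (fun q _ => hw2 q), hgsum, sub_self]
          · exact sub_mem hn (sum_mem fun q _ =>
              (span_le.mpr (Set.singleton_subset_iff.mpr (hx'N q.1 (q.2 + 1)))) (hw1 q))
        have hrest : n - ∑ q ∈ s0, w q ∈ ⨆ q : ℕ × ℕ, span R {x' q.1 q.2} :=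
          (sup_le hY1X hZX) (hYZsup ▸ hker2)
        have hfin := add_mem hwX hrest
        rwa [add_sub_cancel] at hfin
    have hindep' : iSupIndep (fun q : ℕ × ℕ => span R {x' q.1 q.2}) := by
      rw [iSupIndep_iff_finset_sum]
      intro s0 g hg hsum q0 hq0
      have hg0 : ∀ p : ℕ × ℕ, x' p.1 p.2 = 0 → g p = 0 := by
        intro p hp
        have hgp := hg p
        rw [hp, span_zero_singleton, mem_bot] at hgp
        exact hgp
      have hgi0 : ∀ p : ℕ × ℕ, p.2 = 0 → g p = 0 := by
        intro p hp
        exact hg0 p (hx'D p.1 p.2 (by rintro ⟨-, -, hh, -⟩; omega)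
          (by rintro ⟨-, -, hh⟩; omega))
      have hφgmem : ∀ p : ℕ × ℕ, φ (g (p.1, p.2 + 1)) ∈ span R {y p.1 p.2} := by
        intro p
        have h1 := hspanmap _ _ (hg (p.1, p.2 + 1))
        rwa [hkey p.1 p.2] at h1
      set s0' := s0.filter (fun p => 1 ≤ p.2) with hs0'
      have hsum1 : ∑ p ∈ s0', φ (g p) = 0 := by
        have h0 : ∑ p ∈ s0, φ (g p) = 0 := by
          rw [← map_sum, hsum, map_zero]
        rw [← h0]
        apply Finset.sum_filter_of_ne
        intro p hp hne
        by_contra h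
        exact hne (by rw [hgi0 p (by omega), map_zero])
      set s1 := s0'.image (fun p => (p.1, p.2 - 1)) with hs1
      have hsum2 : ∑ p ∈ s1, φ (g (p.1, p.2 + 1)) = 0 := by
        rw [hs1, Finset.sum_image ?inj]
        case inj =>
          intro p hp p' hp' h
          have h1 : 1 ≤ p.2 := (Finset.mem_filter.mp hp).2
          have h2 : 1 ≤ p'.2 := (Finset.mem_filter.mp hp').2
          obtain ⟨ha, hb⟩ := Prod.ext_iff.mp h
          exact Prod.ext ha (by dsimp only at hb; omega)
        rw [← hsum1]
        apply Finset.sum_congr rfl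
        intro p hp
        have h2 : 1 ≤ p.2 := (Finset.mem_filter.mp hp).2
        simp only [show p.2 - 1 + 1 = p.2 from by omega, Prod.mk.eta]
      have hφg0 : ∀ p ∈ s0, 1 ≤ p.2 → φ (g p) = 0 := by
        intro p hp h1
        have hmem1 : (p.1, p.2 - 1) ∈ s1 :=
          Finset.mem_image_of_mem _ (Finset.mem_filter.mpr ⟨hp, h1⟩)
        have h2 := (iSupIndep_iff_finset_sum (fun q : ℕ × ℕ => span R {y q.1 q.2})).mp hindep s1
          (fun p => φ (g (p.1, p.2 + 1))) hφgmem hsum2 (p.1, p.2 - 1) hmem1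
        simpa only [show p.2 - 1 + 1 = p.2 from by omega, Prod.mk.eta] using h2
      have hD : ∀ p ∈ s0, 2 ≤ p.2 → g p = 0 := by
        intro p hp h2
        by_cases hx0 : x' p.1 p.2 = 0
        · exact hg0 p hx0
        · have hrange : 1 ≤ p.1 ∧ p.1 ≤ r ∧ p.2 ≤ kf p.1 + 1 := by
            by_contra hcon
            apply hx0
            apply hx'D
            · intro h
              exact hcon ⟨h.1, h.2.1, h.2.2.2⟩
            · rintro ⟨-, -, h⟩
              omega
          obtain ⟨ha, hb, hcc⟩ := hrange
          have hyne : y p.1 (p.2 - 1) ≠ 0 := hy0ne p.1 (p.2 - 1) ha hb (by omega) (by omega)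
          have hφx : φ (x' p.1 p.2) = y p.1 (p.2 - 1) := by
            have h3 := hkey p.1 (p.2 - 1)
            rwa [show p.2 - 1 + 1 = p.2 from by omega] at h3
          have hatom : IsAtom (span R {x' p.1 p.2}) :=
            (hmem' p.1 p.2 ha (by omega) (by omega)
              (by simp only [hkf'def, if_pos hb]; omega)).2
          have hgk : φ (g p) = 0 := hφg0 p hp (by omega)
          by_contra hgne
          have hle : span R {g p} ≤ span R {x' p.1 p.2} :=
            span_le.mpr (Set.singleton_subset_iff.mpr (hg p))
          have heq : span R {g p} = span R {x' p.1 p.2} :=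
            (le_of_le_atom hatom hle).resolve_left
              (fun h => hgne (span_singleton_eq_bot.mp h))
          have hx_in : x' p.1 p.2 ∈ span R {g p} := heq ▸ mem_span_singleton_self _
          obtain ⟨a, ha'⟩ := mem_span_singleton.mp hx_in
          apply hyne
          rw [← hφx, ← ha', map_smul, hgk, smul_zero]
      set T := s0.filter (fun p => p.2 = 1) with hT
      have hsumT : ∑ p ∈ T, g p = 0 := by
        rw [hT, ← hsum]
        apply Finset.sum_filter_of_ne
        intro p hp hne
        rcases Nat.lt_or_ge p.2 2 with h | h
        · by_contra hne1
          exact hne (hgi0 p (by omega))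
        · exact absurd (hD p hp h) hne
      set T1 := T.filter (fun p => p.1 ≤ r) with hT1
      set T2 := T.filter (fun p => ¬p.1 ≤ r) with hT2
      have hsplit : ∑ p ∈ T1, g p + ∑ p ∈ T2, g p = 0 := by
        rw [hT1, hT2, Finset.sum_filter_add_sum_filter_not, hsumT]
      have hAmem : ∑ p ∈ T1, g p ∈ Y1 := by
        refine sum_mem fun p hp => ?_
        have hp1 : p.2 = 1 := (Finset.mem_filter.mp (Finset.mem_filter.mp hp).1).2
        have hpr : p.1 ≤ r := (Finset.mem_filter.mp hp).2
        by_cases h1 : 1 ≤ p.1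
        · have hx : x' p.1 p.2 = y p.1 1 := by
            rw [hp1]
            exact hx'A p.1 1 h1 hpr le_rfl (hpos p.1 h1 hpr)
          have hg' := hg p
          rw [hx] at hg'
          exact le_iSup (fun t => span R {y t 1}) p.1 hg'
        · have hgz : g p = 0 := hg0 p (hx'D _ _ (by rintro ⟨h, -⟩; omega)
            (by rintro ⟨h, -⟩; omega))
          rw [hgz]
          exact zero_mem _
      have hBmem : ∑ p ∈ T2, g p ∈ Z := by
        refine sum_mem fun p hp => ?_
        have hp1 : p.2 = 1 := (Finset.mem_filter.mp (Finset.mem_filter.mp hp).1).2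
        have hpr : r + 1 ≤ p.1 := by
          have := (Finset.mem_filter.mp hp).2
          omega
        by_cases h1 : p.1 ≤ r + s
        · have hx : x' p.1 p.2 = z (p.1 - r) := by
            rw [hp1]
            exact hx'C p.1 hpr h1
          have hg' := hg p
          rw [hx] at hg'
          exact hz4 ▸ le_iSup (fun j => span R {z j}) (p.1 - r) hg'
        · have hgz : g p = 0 := hg0 p (hx'D _ _ (by rintro ⟨-, h, -⟩; omega)
            (by rintro ⟨-, h, -⟩; omega))
          rw [hgz]
          exact zero_mem _
      have hA0 : ∑ p ∈ T1, g p = 0 := by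
        have h1 : ∑ p ∈ T1, g p = -∑ p ∈ T2, g p := eq_neg_of_add_eq_zero_left hsplit
        have h2 : ∑ p ∈ T1, g p ∈ Y1 ⊓ Z := ⟨hAmem, by rw [h1]; exact neg_mem hBmem⟩
        rw [hYZinf, mem_bot] at h2
        exact h2
      have hB0 : ∑ p ∈ T2, g p = 0 := by
        rw [hA0, zero_add] at hsplit
        exact hsplit
      have hT1g : ∀ p ∈ T1, g p = 0 := by
        intro p hp
        set gA : ℕ × ℕ → M := fun p => if p.2 = 1 ∧ p.1 ≤ r then g p else 0 with hgAdef
        have hgAmem : ∀ p : ℕ × ℕ, gA p ∈ span R {y p.1 p.2} := by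
          intro p
          by_cases h : p.2 = 1 ∧ p.1 ≤ r
          · by_cases h1 : 1 ≤ p.1
            · have hx : x' p.1 p.2 = y p.1 p.2 := by
                rw [h.1]
                exact hx'A p.1 1 h1 h.2 le_rfl (hpos _ h1 h.2)
              have hgp := hg p
              rw [hx] at hgp
              simp only [hgAdef]
              rw [if_pos h]
              exact hgp
            · have hgz : g p = 0 := hg0 p (hx'D _ _ (by rintro ⟨hh, -⟩; omega)
                (by rintro ⟨hh, -⟩; omega))
              simp only [hgAdef]
              rw [if_pos h, hgz]
              exact zero_mem _
          · simp only [hgAdef]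
            rw [if_neg h]
            exact zero_mem _
        have hsumA : ∑ p ∈ T1, gA p = 0 := by
          rw [Finset.sum_congr rfl (fun p hp => ?_), hA0]
          have hp1 : p.2 = 1 := (Finset.mem_filter.mp (Finset.mem_filter.mp hp).1).2
          have hpr : p.1 ≤ r := (Finset.mem_filter.mp hp).2
          simp only [hgAdef]
          rw [if_pos ⟨hp1, hpr⟩]
        have hres := (iSupIndep_iff_finset_sum (fun q : ℕ × ℕ => span R {y q.1 q.2})).mp
          hindep T1 gA hgAmem hsumA p hp
        have hp1 : p.2 = 1 := (Finset.mem_filter.mp (Finset.mem_filter.mp hp).1).2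
        have hpr : p.1 ≤ r := (Finset.mem_filter.mp hp).2
        simp only [hgAdef] at hres
        rwa [if_pos ⟨hp1, hpr⟩] at hres
      have hT2g : ∀ p ∈ T2, g p = 0 := by
        intro p hp
        have hp1 : p.2 = 1 := (Finset.mem_filter.mp (Finset.mem_filter.mp hp).1).2
        have hpr : r + 1 ≤ p.1 := by
          have := (Finset.mem_filter.mp hp).2
          omega
        set gB : ℕ → M := fun j => if 1 ≤ j then g (j + r, 1) else 0 with hgBdef
        have hgBmem : ∀ j, gB j ∈ span R {z j} := by
          intro j
          by_cases hj : 1 ≤ j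
          · by_cases hjs : j ≤ s
            · have hx : x' (j + r) 1 = z j := by
                rw [hx'C (j + r) (by omega) (by omega)]
                congr 1
                omega
              have hgp := hg (j + r, 1)
              rw [hx] at hgp
              simp only [hgBdef]
              rw [if_pos hj]
              exact hgp
            · have hx0 : x' (j + r) 1 = 0 := hx'D _ _ (by rintro ⟨-, h, -⟩; omega)
                (by rintro ⟨-, h, -⟩; omega)
              have hgz := hg0 (j + r, 1) hx0
              simp only [hgBdef]
              rw [if_pos hj, hgz]
              exact zero_mem _
          · simp only [hgBdef]
            rw [if_neg hj]
            exact zero_mem _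
        set SB := T2.image (fun p : ℕ × ℕ => p.1 - r) with hSB
        have hinj : ∀ a ∈ T2, ∀ b ∈ T2, a.1 - r = b.1 - r → a = b := by
          intro a ha b hb h
          have ha1 : a.2 = 1 := (Finset.mem_filter.mp (Finset.mem_filter.mp ha).1).2
          have hb1 : b.2 = 1 := (Finset.mem_filter.mp (Finset.mem_filter.mp hb).1).2
          have har : ¬a.1 ≤ r := (Finset.mem_filter.mp ha).2
          have hbr : ¬b.1 ≤ r := (Finset.mem_filter.mp hb).2
          exact Prod.ext (by omega) (by omega)
        have hsumB : ∑ j ∈ SB, gB j = 0 := by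
          rw [hSB, Finset.sum_image hinj, ← hB0]
          apply Finset.sum_congr rfl
          intro p hp'
          have hp1' : p.2 = 1 := (Finset.mem_filter.mp (Finset.mem_filter.mp hp').1).2
          have hpr' : ¬p.1 ≤ r := (Finset.mem_filter.mp hp').2
          simp only [hgBdef]
          rw [if_pos (by omega : 1 ≤ p.1 - r), show p.1 - r + r = p.1 from by omega,
            show ((p.1 : ℕ), (1 : ℕ)) = p from Prod.ext rfl (by omega)]
        have hres := (iSupIndep_iff_finset_sum (fun j : ℕ => span R {z j})).mp hz3 SB gB hgBmem
          hsumB (p.1 - r) (Finset.mem_image_of_mem _ hp)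
        simp only [hgBdef] at hres
        rwa [if_pos (by omega : 1 ≤ p.1 - r), show p.1 - r + r = p.1 from by omega,
          show ((p.1 : ℕ), (1 : ℕ)) = p from Prod.ext rfl (by omega)] at hres
      rcases Nat.lt_or_ge q0.2 1 with h | h
      · exact hgi0 q0 (by omega)
      rcases Nat.lt_or_ge q0.2 2 with h2 | h2
      · have hq1 : q0.2 = 1 := by omega
        by_cases hqr : q0.1 ≤ r
        · exact hT1g q0 (Finset.mem_filter.mpr ⟨Finset.mem_filter.mpr ⟨hq0, hq1⟩, hqr⟩)
        · exact hT2g q0 (Finset.mem_filter.mpr ⟨Finset.mem_filter.mpr ⟨hq0, hq1⟩, hqr⟩)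
      · exact hD q0 hq0 h2
    exact ⟨r + s, kf', x', hpos', hmem', hpad', hindep', hsup', hchain', hker'⟩


end Stmt13Aux

open Stmt13Aux in
/-- Jordan normal base for a nilpotent endomorphism `φ` of a finitely
generated semisimple module `M`: there are elements `x t i` (`1 ≤ t ≤ r`,
`1 ≤ i ≤ k t`) such that each cyclic submodule `R·(x t i)` is simple, `M` is
the internal direct sum of these cyclic submodules, and
`φ (x t i) = x t (i-1)`, `φ (x t 1) = 0`. -/
theorem stmt_13 {R M : Type*} [Ring R] [AddCommGroup M] [Module R M]
    [IsSemisimpleModule R M] [Module.Finite R M]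
    (φ : M →ₗ[R] M) (hnilp : ∃ k : ℕ, 1 ≤ k ∧ (φ ^ k : M →ₗ[R] M) = 0) :
    ∃ (r : ℕ) (k : ℕ → ℕ) (x : ℕ → ℕ → M),
      (∀ t i, 1 ≤ t → t ≤ r → 1 ≤ i → i ≤ k t →
        IsSimpleModule R (Submodule.span R {x t i})) ∧
      iSupIndep
        (fun p : {p : ℕ × ℕ // 1 ≤ p.1 ∧ p.1 ≤ r ∧ 1 ≤ p.2 ∧ p.2 ≤ k p.1} =>
          Submodule.span R {x p.1.1 p.1.2}) ∧
      (⨆ p : {p : ℕ × ℕ // 1 ≤ p.1 ∧ p.1 ≤ r ∧ 1 ≤ p.2 ∧ p.2 ≤ k p.1},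
          Submodule.span R {x p.1.1 p.1.2}) = ⊤ ∧
      (∀ t i, 1 ≤ t → t ≤ r → 2 ≤ i → i ≤ k t → φ (x t i) = x t (i - 1)) ∧
      (∀ t, 1 ≤ t → t ≤ r → φ (x t 1) = 0) := by
  obtain ⟨k0, -, hk0⟩ := hnilp
  obtain ⟨r, kf, x, hpos, hmem, hpad, hindep, hsup, hchain, hker⟩ :=
    jordan_on φ k0 ⊤ le_top (fun m _ => by rw [hk0]; rfl)
  refine ⟨r, kf, x, ?_, ?_, ?_, hchain, hker⟩
  · intro t i h1 h2 h3 h4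
    rw [isSimpleModule_iff_isAtom]
    exact (hmem t i h1 h2 h3 h4).2
  · exact hindep.comp Subtype.val_injective
  · apply le_antisymm le_top
    rw [← hsup]
    apply iSup_le
    intro q
    by_cases h : 1 ≤ q.1 ∧ q.1 ≤ r ∧ 1 ≤ q.2 ∧ q.2 ≤ kf q.1
    · exact le_iSup
        (fun p : {p : ℕ × ℕ // 1 ≤ p.1 ∧ p.1 ≤ r ∧ 1 ≤ p.2 ∧ p.2 ≤ kf p.1} =>
          Submodule.span R {x p.1.1 p.1.2}) ⟨q, h⟩
    · rw [hpad q.1 q.2 h, Submodule.span_zero_singleton]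
      exact bot_le
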